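/- Let n ≥ 2 and consider the dihedral group D_{2n} of order 2n (Mathlib's DihedralGroup n) with generating set Re = {sr 0, sr 1} and associated length function ℓ. Then ℓ(g) ≤ n for all g ∈ D_{2n}; there is exactly one element of length 0 and exactly one element of length n; and for every k with 1 ≤ k ≤ n − 1 there are exactly two elements of length k. Equivalently, the Poincaré polynomial of (D_{2n}, Re) equals 1 + 2t + 2t² + ⋯ + 2t^{n−1} + t^n = (1+t)(1 + t + ⋯ + t^{n−1}). -/

import Mathlib

/-- The length of `g ∈ G` with respect to a generating set `Re`:
the smallest `n` such that `g` is a product of `n` elements of `Re`. -/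
noncomputable def wordLength {G : Type*} [Group G] (Re : Set G) (g : G) : ℕ :=
  sInf {n : ℕ | ∃ l : List G, (∀ x ∈ l, x ∈ Re) ∧ l.length = n ∧ l.prod = g}

open DihedralGroup

/-- The "norm": the conjectured word length. -/
private def nrm {n : ℕ} : DihedralGroup n → ℕ
  | r i => 2 * min i.val (-i).val
  | sr j => 2 * min (-j).val (j - 1).val + 1

private lemma valR {n : ℕ} [NeZero n] (x : ZMod n) :
    (x.val = 0 ∧ (-x).val = 0 ∧ (x - 1).val = n - 1) ∨
    (1 ≤ x.val ∧ x.val + (-x).val = n ∧ (x - 1).val = x.val - 1) := by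
  rcases eq_or_ne x 0 with h | h
  · left
    subst h
    obtain ⟨m, rfl⟩ : ∃ m, n = m + 1 := ⟨n - 1, (Nat.succ_pred_eq_of_pos (NeZero.pos n)).symm⟩
    simp [ZMod.val_neg_one]
  · right
    have h1 : 1 ≤ x.val := by
      have := (ZMod.val_eq_zero x).not.mpr h
      omega
    have hlt : x.val < n := x.val_lt
    haveI : NeZero x := ⟨h⟩
    have h2 : (-x).val = n - x.val := ZMod.val_neg_of_ne_zero x
    have h3 : x - 1 = ((x.val - 1 : ℕ) : ZMod n) := by
      rw [Nat.cast_sub h1, Nat.cast_one, ZMod.natCast_zmod_val]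
    refine ⟨h1, by omega, by rw [h3, ZMod.val_cast_of_lt (by omega)]⟩

private lemma val_eq_iff {n : ℕ} [NeZero n] {m : ℕ} (hm : m < n) (i : ZMod n) :
    i.val = m ↔ i = (m : ZMod n) := by
  constructor
  · intro h; rw [← h, ZMod.natCast_zmod_val]
  · intro h; rw [h, ZMod.val_cast_of_lt hm]

private def wrd {n : ℕ} : Bool → ℕ → List (DihedralGroup n)
  | _, 0 => []
  | true, k + 1 => sr 0 :: wrd false k
  | false, k + 1 => sr 1 :: wrd true k

private lemma wrd_length {n : ℕ} (b : Bool) (k : ℕ) : (wrd (n := n) b k).length = k := by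
  induction k generalizing b with
  | zero => cases b <;> rfl
  | succ k ih => cases b <;> simp [wrd, ih]

private lemma wrd_mem {n : ℕ} (b : Bool) (k : ℕ) :
    ∀ x ∈ wrd (n := n) b k, x ∈ ({sr 0, sr 1} : Set (DihedralGroup n)) := by
  induction k generalizing b with
  | zero => cases b <;> simp [wrd]
  | succ k ih =>
    intro x hx
    cases b <;> rcases List.mem_cons.mp hx with h | h <;>
      first
        | (subst h; simp)
        | exact ih _ x h

private lemma wrd_prod_even {n : ℕ} (m : ℕ) :
    (wrd (n := n) true (2 * m)).prod = r (m : ZMod n) ∧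
    (wrd (n := n) false (2 * m)).prod = r (-(m : ZMod n)) := by
  induction m with
  | zero => simp [wrd]
  | succ m ih =>
    have h2 : 2 * (m + 1) = 2 * m + 1 + 1 := by ring
    rw [h2]
    simp only [wrd, List.prod_cons, ih.1, ih.2]
    rw [sr_mul_r, sr_mul_sr, sr_mul_r, sr_mul_sr]
    constructor <;> · congr 1; push_cast; ring

private lemma wrd_prod_odd {n : ℕ} (m : ℕ) :
    (wrd (n := n) true (2 * m + 1)).prod = sr (-(m : ZMod n)) ∧
    (wrd (n := n) false (2 * m + 1)).prod = sr (1 + (m : ZMod n)) := by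
  have h := wrd_prod_even (n := n) m
  simp only [wrd, List.prod_cons, h.1, h.2]
  rw [sr_mul_r, sr_mul_r]
  exact ⟨by rw [zero_add], by rfl⟩

private lemma nrm_step {n : ℕ} [NeZero n] (x h : DihedralGroup n)
    (hx : x ∈ ({sr 0, sr 1} : Set (DihedralGroup n))) : nrm (x * h) ≤ nrm h + 1 := by
  rcases hx with rfl | rfl
  · cases h with
    | r i =>
      rw [sr_mul_r, zero_add]
      have h1 := valR i
      show 2 * min (-i).val (i - 1).val + 1 ≤ 2 * min i.val (-i).val + 1
      omega
    | sr j =>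
      rw [sr_mul_sr, sub_zero]
      have h1 := valR j
      show 2 * min j.val (-j).val ≤ 2 * min (-j).val (j - 1).val + 1 + 1
      omega
  · cases h with
    | r i =>
      rw [sr_mul_r]
      have h2 := valR (-i)
      rw [neg_neg] at h2
      have e1 : (1 : ZMod n) + i - 1 = i := by ring
      have e2 : -(1 + i) = -i - 1 := by ring
      show 2 * min (-(1 + i)).val ((1 + i - 1)).val + 1 ≤ 2 * min i.val (-i).val + 1
      rw [e1, e2]
      omega
    | sr j =>
      rw [sr_mul_sr]
      have h1 := valR j
      have h2 := valR (j - 1)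
      show 2 * min (j - 1).val (-(j - 1)).val ≤ 2 * min (-j).val (j - 1).val + 1 + 1
      omega

private lemma nrm_prod_le {n : ℕ} [NeZero n] :
    ∀ l : List (DihedralGroup n), (∀ x ∈ l, x ∈ ({sr 0, sr 1} : Set (DihedralGroup n))) →
      nrm l.prod ≤ l.length := by
  intro l
  induction l with
  | nil =>
    intro _
    simp only [List.prod_nil, List.length_nil, one_def]
    show 2 * min (0 : ZMod n).val (-(0 : ZMod n)).val ≤ 0
    simp
  | cons x l ih =>
    intro hmem
    rw [List.prod_cons, List.length_cons]
    calc nrm (x * l.prod) ≤ nrm l.prod + 1 := nrm_step x _ (hmem x (by simp))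
      _ ≤ l.length + 1 := by
          have := ih (fun y hy => hmem y (List.mem_cons_of_mem _ hy))
          omega

private lemma wordLength_eq_nrm {n : ℕ} [NeZero n] (g : DihedralGroup n) :
    wordLength ({sr 0, sr 1} : Set (DihedralGroup n)) g = nrm g := by
  have hub : ∀ (b : Bool) (k : ℕ), (wrd (n := n) b k).prod = g →
      wordLength ({sr 0, sr 1} : Set (DihedralGroup n)) g ≤ k := by
    intro b k hk
    exact Nat.sInf_le ⟨wrd b k, wrd_mem b k, wrd_length b k, hk⟩
  have hle : wordLength ({sr 0, sr 1} : Set (DihedralGroup n)) g ≤ nrm g := by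
    cases g with
    | r i =>
      show _ ≤ 2 * min i.val (-i).val
      rcases le_total i.val (-i).val with h | h
      · rw [min_eq_left h]
        exact hub true (2 * i.val) (by rw [(wrd_prod_even i.val).1, ZMod.natCast_zmod_val])
      · rw [min_eq_right h]
        exact hub false (2 * (-i).val)
          (by rw [(wrd_prod_even (-i).val).2, ZMod.natCast_zmod_val, neg_neg])
    | sr j =>
      show _ ≤ 2 * min (-j).val (j - 1).val + 1
      rcases le_total (-j).val (j - 1).val with h | h
      · rw [min_eq_left h]
        exact hub true (2 * (-j).val + 1)
          (by rw [(wrd_prod_odd (-j).val).1, ZMod.natCast_zmod_val, neg_neg])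
      · rw [min_eq_right h]
        exact hub false (2 * (j - 1).val + 1)
          (by rw [(wrd_prod_odd (j - 1).val).2, ZMod.natCast_zmod_val]; congr 1; ring)
  refine le_antisymm hle ?_
  have hne : {m : ℕ | ∃ l : List (DihedralGroup n),
      (∀ x ∈ l, x ∈ ({sr 0, sr 1} : Set (DihedralGroup n))) ∧ l.length = m ∧ l.prod = g}.Nonempty := by
    cases g with
    | r i => exact ⟨2 * i.val, wrd true _, wrd_mem _ _, wrd_length _ _,
        by rw [(wrd_prod_even i.val).1, ZMod.natCast_zmod_val]⟩
    | sr j => exact ⟨2 * (-j).val + 1, wrd true _, wrd_mem _ _, wrd_length _ _,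
        by rw [(wrd_prod_odd (-j).val).1, ZMod.natCast_zmod_val, neg_neg]⟩
  obtain ⟨l, hl1, hl2, hl3⟩ := Nat.sInf_mem hne
  rw [wordLength, ← hl2, ← hl3]
  exact nrm_prod_le l hl1


open DihedralGroup in
/-- For `n ≥ 2`, the Poincaré polynomial of the dihedral group `D_{2n}` with
generating set `{sr 0, sr 1}` is `1 + 2t + ⋯ + 2t^{n-1} + t^n`: every element
has length at most `n`, there is exactly one element of length `0`, exactly one
of length `n`, and exactly two of each length `k` with `1 ≤ k ≤ n - 1`. -/
theorem dihedralGroup_poincare_polynomial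
    (n : ℕ) (hn : 2 ≤ n) :
    (∀ g : DihedralGroup n, wordLength ({sr 0, sr 1} : Set (DihedralGroup n)) g ≤ n) ∧
    Nat.card {g : DihedralGroup n //
      wordLength ({sr 0, sr 1} : Set (DihedralGroup n)) g = 0} = 1 ∧
    Nat.card {g : DihedralGroup n //
      wordLength ({sr 0, sr 1} : Set (DihedralGroup n)) g = n} = 1 ∧
    (∀ k : ℕ, 1 ≤ k → k ≤ n - 1 →
      Nat.card {g : DihedralGroup n //
        wordLength ({sr 0, sr 1} : Set (DihedralGroup n)) g = k} = 2) := by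
  haveI : NeZero n := ⟨by omega⟩
  refine ⟨?_, ?_, ?_, ?_⟩
  · intro g
    rw [wordLength_eq_nrm]
    cases g with
    | r i =>
      have h1 := valR i
      have h2 := i.val_lt
      show 2 * min i.val (-i).val ≤ n
      omega
    | sr j =>
      have h1 := valR j
      show 2 * min (-j).val (j - 1).val + 1 ≤ n
      omega
  · refine (Nat.card_coe_set_eq
      {g : DihedralGroup n | wordLength ({sr 0, sr 1} : Set (DihedralGroup n)) g = 0}).trans ?_
    have hset : {g : DihedralGroup n | wordLength ({sr 0, sr 1} : Set (DihedralGroup n)) g = 0}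
        = {(1 : DihedralGroup n)} := by
      ext g
      simp only [Set.mem_setOf_eq, Set.mem_singleton_iff, wordLength_eq_nrm, one_def]
      cases g with
      | r i =>
        have h1 := valR i
        have h2 := i.val_lt
        simp only [r.injEq]
        rw [← ZMod.val_eq_zero]
        show 2 * min i.val (-i).val = 0 ↔ i.val = 0
        omega
      | sr j =>
        constructor
        · intro h
          exact absurd h (by show 2 * min (-j).val (j - 1).val + 1 ≠ 0; omega)
        · intro h
          exact absurd h (by simp [-r_zero])
    rw [hset, Set.ncard_singleton]
  · refine (Nat.card_coe_set_eq
      {g : DihedralGroup n | wordLength ({sr 0, sr 1} : Set (DihedralGroup n)) g = n}).trans ?_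
    rcases Nat.even_or_odd n with ⟨m, hm⟩ | ⟨m, hm⟩
    · -- n = m + m, the unique longest element is r m
      have hset : {g : DihedralGroup n | wordLength ({sr 0, sr 1} : Set (DihedralGroup n)) g = n}
          = {r ((m : ℕ) : ZMod n)} := by
        ext g
        simp only [Set.mem_setOf_eq, Set.mem_singleton_iff, wordLength_eq_nrm]
        cases g with
        | r i =>
          have h1 := valR i
          have h2 := i.val_lt
          simp only [r.injEq]
          rw [← val_eq_iff (show m < n by omega) i]
          show 2 * min i.val (-i).val = n ↔ i.val = m
          omega
        | sr j =>
          have h1 := valR j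
          constructor
          · intro h
            exact absurd h (by show 2 * min (-j).val (j - 1).val + 1 ≠ n; omega)
          · intro h
            exact absurd h (by simp)
      rw [hset, Set.ncard_singleton]
    · -- n = 2m+1, the unique longest element is sr (m+1)
      have hset : {g : DihedralGroup n | wordLength ({sr 0, sr 1} : Set (DihedralGroup n)) g = n}
          = {sr (((m + 1 : ℕ)) : ZMod n)} := by
        ext g
        simp only [Set.mem_setOf_eq, Set.mem_singleton_iff, wordLength_eq_nrm]
        cases g with
        | r i =>
          have h1 := valR i
          have h2 := i.val_lt
          constructor
          · intro h
            exact absurd h (by show 2 * min i.val (-i).val ≠ n; omega)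
          · intro h
            exact absurd h (by simp)
        | sr j =>
          have h1 := valR j
          simp only [sr.injEq]
          rw [show ((m + 1 : ℕ) : ZMod n) = (m : ZMod n) + 1 by push_cast; ring,
            ← sub_eq_iff_eq_add, ← val_eq_iff (show m < n by omega) (j - 1)]
          show 2 * min (-j).val (j - 1).val + 1 = n ↔ (j - 1).val = m
          omega
      rw [hset, Set.ncard_singleton]
  · intro k hk1 hk2
    refine (Nat.card_coe_set_eq
      {g : DihedralGroup n | wordLength ({sr 0, sr 1} : Set (DihedralGroup n)) g = k}).trans ?_
    rcases Nat.even_or_odd k with ⟨m, hm⟩ | ⟨m, hm⟩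
    · -- k = m + m : the two elements are r m and r (-m)
      have hmn : m < n := by omega
      have hset : {g : DihedralGroup n | wordLength ({sr 0, sr 1} : Set (DihedralGroup n)) g = k}
          = {r ((m : ℕ) : ZMod n), r (-((m : ℕ) : ZMod n))} := by
        ext g
        simp only [Set.mem_setOf_eq, Set.mem_insert_iff, Set.mem_singleton_iff, wordLength_eq_nrm]
        cases g with
        | r i =>
          have h1 := valR i
          have h2 := i.val_lt
          simp only [r.injEq]
          rw [← neg_eq_iff_eq_neg, ← val_eq_iff hmn i, ← val_eq_iff hmn (-i)]
          show 2 * min i.val (-i).val = k ↔ i.val = m ∨ (-i).val = m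
          omega
        | sr j =>
          have h1 := valR j
          constructor
          · intro h
            exact absurd h (by show 2 * min (-j).val (j - 1).val + 1 ≠ k; omega)
          · intro h
            rcases h with h | h <;> exact absurd h (by simp)
      have hne : r ((m : ℕ) : ZMod n) ≠ r (-((m : ℕ) : ZMod n)) := by
        simp only [ne_eq, r.injEq]
        intro h
        have h0 : ((m + m : ℕ) : ZMod n) = 0 := by push_cast; nth_rewrite 2 [h]; ring
        have := (ZMod.natCast_eq_zero_iff _ _).mp h0
        have := Nat.le_of_dvd (by omega) this
        omega
      rw [hset, Set.ncard_pair hne]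
    · -- k = 2m+1 : the two elements are sr (-m) and sr (m+1)
      have hmn : m < n := by omega
      have hcast : ((m + 1 : ℕ) : ZMod n) = (m : ZMod n) + 1 := by push_cast; ring
      have hset : {g : DihedralGroup n | wordLength ({sr 0, sr 1} : Set (DihedralGroup n)) g = k}
          = {sr (-((m : ℕ) : ZMod n)), sr (((m + 1 : ℕ)) : ZMod n)} := by
        ext g
        simp only [Set.mem_setOf_eq, Set.mem_insert_iff, Set.mem_singleton_iff, wordLength_eq_nrm]
        cases g with
        | r i =>
          have h1 := valR i
          have h2 := i.val_lt
          constructor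
          · intro h
            exact absurd h (by show 2 * min i.val (-i).val ≠ k; omega)
          · intro h
            rcases h with h | h <;> exact absurd h (by simp)
        | sr j =>
          have h1 := valR j
          simp only [sr.injEq]
          rw [← neg_eq_iff_eq_neg, ← val_eq_iff hmn (-j), hcast,
            ← sub_eq_iff_eq_add, ← val_eq_iff hmn (j - 1)]
          show 2 * min (-j).val (j - 1).val + 1 = k ↔ (-j).val = m ∨ (j - 1).val = m
          omega
      have hne : sr (-((m : ℕ) : ZMod n)) ≠ sr (((m + 1 : ℕ)) : ZMod n) := by
        simp only [ne_eq, sr.injEq]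
        intro h
        rw [hcast] at h
        have h0 : ((m + (m + 1) : ℕ) : ZMod n) = 0 := by push_cast; rw [← h]; ring
        have := (ZMod.natCast_eq_zero_iff _ _).mp h0
        have := Nat.le_of_dvd (by omega) this
        omega
      rw [hset, Set.ncard_pair hne]
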